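/- Let G be a finite group and let r be a function assigning to each conjugacy class of G a representative element of that class. Then the number of orbits of G acting by simultaneous conjugation on the set of commuting pairs {(g,x) ∈ G × G : gx = xg} equals the sum, over all conjugacy classes c of G, of the number of conjugacy classes of the centralizer subgroup Z_{r(c)}. -/
import Mathlib

/-- The number of orbits of a finite group `G` acting by simultaneous conjugation
on the set of commuting pairs equals the sum, over all conjugacy classes `c` of
`G` (with chosen representatives `r c`), of the number of conjugacy classes of
the centralizer `Z_{r c}`. -/
theorem card_commuting_pair_orbits_eq_sum_card_conjClasses_centralizer
    {G : Type*} [Group G] [Fintype G] (r : ConjClasses G → G)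
    (hr : ∀ c, ConjClasses.mk (r c) = c) :
    Nat.card (Quot (fun p q : {p : G × G // p.1 * p.2 = p.2 * p.1} =>
        ∃ z : G, z * p.1.1 * z⁻¹ = q.1.1 ∧ z * p.1.2 * z⁻¹ = q.1.2)) =
    ∑ᶠ c : ConjClasses G, Nat.card (ConjClasses (Subgroup.centralizer {r c})) := by
  classical
  set R := (fun p q : {p : G × G // p.1 * p.2 = p.2 * p.1} =>
        ∃ z : G, z * p.1.1 * z⁻¹ = q.1.1 ∧ z * p.1.2 * z⁻¹ = q.1.2) with hRdef
  have hequiv : Equivalence R := by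
    constructor
    · intro p; exact ⟨1, by simp⟩
    · rintro p q ⟨z, h1, h2⟩
      exact ⟨z⁻¹, by rw [← h1]; group, by rw [← h2]; group⟩
    · rintro p q s ⟨z, h1, h2⟩ ⟨w, h3, h4⟩
      exact ⟨w * z, by rw [← h3, ← h1]; group, by rw [← h4, ← h2]; group⟩
  have fwd : ∀ p q : {p : G × G // p.1 * p.2 = p.2 * p.1}, R p q →
      ConjClasses.mk p.1.1 = ConjClasses.mk q.1.1 := by
    rintro p q ⟨z, h1, _⟩
    exact ConjClasses.mk_eq_mk_iff_isConj.mpr (isConj_iff.mpr ⟨z, h1⟩)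
  set f : Quot R → ConjClasses G := Quot.lift (fun p => ConjClasses.mk p.1.1) fwd with hf
  set φ : ∀ c : ConjClasses G,
      ConjClasses (Subgroup.centralizer ({r c} : Set G)) → {q : Quot R // f q = c} :=
    fun c x => Quotient.liftOn x
      (fun x : Subgroup.centralizer ({r c} : Set G) =>
        (⟨Quot.mk R ⟨(r c, (x : G)), x.2 (r c) rfl⟩, hr c⟩ : {q : Quot R // f q = c}))
      (by
        intro a b hab
        obtain ⟨z, hz⟩ := isConj_iff.mp hab
        refine Subtype.ext (Quot.sound ⟨(z : G), ?_, ?_⟩)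
        · have hc := z.2 (r c) rfl
          dsimp only
          rw [← hc]; group
        · have : ((z * a * z⁻¹ : Subgroup.centralizer ({r c} : Set G)) : G)
              = ((b : G)) := by rw [hz]
          simpa using this) with hφ
  have key : ∀ c : ConjClasses G, Function.Bijective (φ c) := by
    intro c
    constructor
    · -- injective
      intro x y hxy
      induction x using Quotient.inductionOn with | h a =>
      induction y using Quotient.inductionOn with | h b =>
      have h1 : Quot.mk R ⟨(r c, (a : G)), a.2 (r c) rfl⟩
          = Quot.mk R ⟨(r c, (b : G)), b.2 (r c) rfl⟩ :=
        congrArg Subtype.val hxy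
      obtain ⟨z, hz1, hz2⟩ := (hequiv.eqvGen_iff).mp (Quot.eqvGen_exact h1)
      have hzmem : z ∈ Subgroup.centralizer ({r c} : Set G) := by
        intro h hh
        simp only [Set.mem_singleton_iff] at hh
        subst hh
        dsimp only at hz1
        nth_rewrite 1 [← hz1]
        group
      apply Quotient.sound
      refine isConj_iff.mpr ⟨⟨z, hzmem⟩, ?_⟩
      exact Subtype.ext (by simpa using hz2)
    · -- surjective
      rintro ⟨q, hq⟩
      revert hq
      induction q using Quot.ind with | mk p => ?_
      obtain ⟨⟨g, x⟩, hgx⟩ := p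
      intro hp
      have hcc : ConjClasses.mk (r c) = ConjClasses.mk g := by
        rw [hr c]; exact hp.symm
      obtain ⟨z, hz⟩ := isConj_iff.mp (ConjClasses.mk_eq_mk_iff_isConj.mp hcc)
      -- hz : z * r c * z⁻¹ = g
      have hrc : r c = z⁻¹ * g * z := by rw [← hz]; group
      have hx'mem : (z⁻¹ * x * z) ∈ Subgroup.centralizer ({r c} : Set G) := by
        intro h hh
        simp only [Set.mem_singleton_iff] at hh
        subst hh
        dsimp only at hgx ⊢
        rw [hrc]
        calc (z⁻¹ * g * z) * (z⁻¹ * x * z) = z⁻¹ * (g * x) * z := by group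
        _ = z⁻¹ * (x * g) * z := by rw [hgx]
        _ = (z⁻¹ * x * z) * (z⁻¹ * g * z) := by group
      refine ⟨Quotient.mk _ ⟨z⁻¹ * x * z, hx'mem⟩, Subtype.ext ?_⟩
      exact Quot.sound ⟨z, hz, by group⟩
  -- assemble
  have e : (Quot R) ≃ Σ c : ConjClasses G,
      ConjClasses (Subgroup.centralizer ({r c} : Set G)) :=
    (Equiv.sigmaFiberEquiv f).symm.trans
      (Equiv.sigmaCongrRight fun c => (Equiv.ofBijective _ (key c)).symm)
  rw [Nat.card_congr e]
  haveI : Fintype (ConjClasses G) := Fintype.ofFinite _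
  haveI : ∀ c : ConjClasses G,
      Fintype (ConjClasses (Subgroup.centralizer ({r c} : Set G))) :=
    fun c => Fintype.ofFinite _
  rw [finsum_eq_sum_of_fintype]
  simp [Nat.card_eq_fintype_card, Fintype.card_sigma]
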